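/- Let a, x be complex numbers with a + m ≠ 0 for every natural number m. Define, for each natural number k, S(k) = ∑_{j=0}^{k} (a+3)_j (−k)_j x^j / ((a)_j · j!), where (−k)_j denotes the Pochhammer symbol of the complex number −k. Then for every natural number k, (−2a − 6x²ka² + 6x³ka + 3x³ka² + 2x³k + 2x³a − 3x²a³ + x³k³ + 3x³k² − 15x²ka − 3x²k²a + 3x³k²a − 6x²k² + 3x³a² + x³a³ + 9xka + 6xa + 6xk − 3a² − a³ + 3xka² + 3xa³ + 9xa² − 6x²a − 6x²k − 9x²a²) · S(k+1) + (x−1) · (−2a + 6x + 6x³ − 6x²ka² + 12x³ka + 3x³ka² + 11x³k + 11x³a − 3x²a³ + x³k³ + 6x³k² − 21x²ka − 3x²k²a + 3x³k²a − 6x²k² + 6x³a² + x³a³ + 9xka + 15xa + 6xk − 3a² − a³ + 3xka² − 12x² + 3xa³ + 12xa² − 24x²a − 18x²k − 15x²a²) · S(k) = 0. (This is the first-order recurrence in k, with cubic polynomial coefficients in k having no proper factorization over ℚ, satisfied by the polynomials ₂F₁(a+3, −k; a; x).) -/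

import Mathlib

/-- Rising factorial (Pochhammer symbol) `(z)_n` over the complex numbers. -/
noncomputable def poch (z : ℂ) (n : ℕ) : ℂ := (ascPochhammer ℂ n).eval z

lemma poch_zero (z : ℂ) : poch z 0 = 1 := by simp [poch]

lemma poch_succ (z : ℂ) (n : ℕ) : poch z (n + 1) = poch z n * (z + n) := by
  simp [poch, ascPochhammer_succ_right]

lemma poch_a_ne {a : ℂ} (ha : ∀ m : ℕ, a + (m : ℂ) ≠ 0) : ∀ j : ℕ, poch a j ≠ 0 := by
  intro j
  induction j with
  | zero => simp [poch_zero]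
  | succ n ih => rw [poch_succ]; exact mul_ne_zero ih (ha n)

lemma poch_neg_nat (k : ℕ) : poch (-(k : ℂ)) (k + 1) = 0 := by
  rw [poch_succ]; simp

lemma pochP (k : ℕ) : ∀ j : ℕ,
    ((k : ℂ) + 1 - (j : ℂ)) * poch (-((k : ℂ) + 1)) j = ((k : ℂ) + 1) * poch (-(k : ℂ)) j := by
  intro j
  induction j with
  | zero => simp [poch_zero]
  | succ n ih =>
    rw [poch_succ, poch_succ]
    push_cast
    linear_combination ((n : ℂ) - (k : ℂ)) * ih

set_option maxHeartbeats 2000000 in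
set_option maxRecDepth 10000 in
/-- Certificate polynomial for the Zeilberger telescoping. -/
noncomputable def Mf (a x k j : ℂ) : ℂ := 12*j*x + 36*j*a*x - 24*j*a*x^2 + 6*j*a*x^3 + 4*j*a^2 + 27*j*a^2*x - 36*j*a^2*x^2 + 11*j*a^2*x^3 + 12*j*a^3 - 18*j*a^3*x + 6*j*a^3*x^2 + 13*j*a^4 - 36*j*a^4*x + 33*j*a^4*x^2 - 10*j*a^4*x^3 + 6*j*a^5 - 18*j*a^5*x + 18*j*a^5*x^2 - 6*j*a^5*x^3 + 1*j*a^6 - 3*j*a^6*x + 3*j*a^6*x^2 - 1*j*a^6*x^3 + 12*j*k*x + 24*j*k*a*x - 36*j*k*a*x^2 + 11*j*k*a*x^3 + 3*j*k*a^2*x - 24*j*k*a^2*x^2 + 12*j*k*a^2*x^3 - 21*j*k*a^3*x + 27*j*k*a^3*x^2 - 8*j*k*a^3*x^3 - 15*j*k*a^4*x + 27*j*k*a^4*x^2 - 12*j*k*a^4*x^3 - 3*j*k*a^5*x + 6*j*k*a^5*x^2 - 3*j*k*a^5*x^3 - 12*j*k^2*a*x^2 + 6*j*k^2*a*x^3 +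 3*j*k^2*a^2*x^3 + 9*j*k^2*a^3*x^2 - 6*j*k^2*a^3*x^3 + 3*j*k^2*a^4*x^2 - 3*j*k^2*a^4*x^3 + 1*j*k^3*a*x^3 - 1*j*k^3*a^3*x^3 + 6*j^2*x - 24*j^2*x^2 + 6*j^2*x^3 + 4*j^2*a - 9*j^2*a*x - 24*j^2*a*x^2 + 11*j^2*a*x^3 + 18*j^2*a^2 - 66*j^2*a^2*x + 54*j^2*a^2*x^2 - 12*j^2*a^2*x^3 + 26*j^2*a^3 - 90*j^2*a^3*x + 96*j^2*a^3*x^2 - 32*j^2*a^3*x^3 + 15*j^2*a^4 - 48*j^2*a^4*x + 51*j^2*a^4*x^2 - 18*j^2*a^4*x^3 + 3*j^2*a^5 - 9*j^2*a^5*x + 9*j^2*a^5*x^2 - 3*j^2*a^5*x^3 + 6*j^2*k*x - 36*j^2*k*x^2 + 11*j^2*k*x^3 - 15*j^2*k*a*x - 6*j^2*k*a*x^2 + 12*j^2*k*a*x^3 - 51*j^2*k*a^2*x + 84*j^2*k*a^2*x^2 - 30*j^2*k*a^2*x^3 - 39*j^2*k*a^3*x + 75*j^2*k*a^3*x^2 -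 36*j^2*k*a^3*x^3 - 9*j^2*k*a^4*x + 18*j^2*k*a^4*x^2 - 9*j^2*k*a^4*x^3 - 12*j^2*k^2*x^2 + 6*j^2*k^2*x^3 + 6*j^2*k^2*a*x^2 + 3*j^2*k^2*a*x^3 + 24*j^2*k^2*a^2*x^2 - 18*j^2*k^2*a^2*x^3 + 9*j^2*k^2*a^3*x^2 - 9*j^2*k^2*a^3*x^3 + 1*j^2*k^3*x^3 - 3*j^2*k^3*a^2*x^3 - 12*j^3*x + 12*j^3*x^2 + 6*j^3*a - 48*j^3*a*x + 60*j^3*a*x^2 - 18*j^3*a*x^3 + 15*j^3*a^2 - 69*j^3*a^2*x + 87*j^3*a^2*x^2 - 33*j^3*a^2*x^3 + 12*j^3*a^3 - 42*j^3*a^3*x + 48*j^3*a^3*x^2 - 18*j^3*a^3*x^3 + 3*j^3*a^4 - 9*j^3*a^4*x + 9*j^3*a^4*x^2 - 3*j^3*a^4*x^3 - 12*j^3*k*x + 18*j^3*k*x^2 - 36*j^3*k*a*x + 75*j^3*k*a*x^2 - 33*j^3*k*a*x^3 - 33*j^3*k*a^2*x + 69*j^3*k*a^2*x^2 - 36*j^3*k*a^2*x^3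 - 9*j^3*k*a^3*x + 18*j^3*k*a^3*x^2 - 9*j^3*k*a^3*x^3 + 6*j^3*k^2*x^2 + 21*j^3*k^2*a*x^2 - 18*j^3*k^2*a*x^3 + 9*j^3*k^2*a^2*x^2 - 9*j^3*k^2*a^2*x^3 - 3*j^3*k^3*a*x^3 - 6*j^4*x + 12*j^4*x^2 - 6*j^4*x^3 + 2*j^4*a - 15*j^4*a*x + 24*j^4*a*x^2 - 11*j^4*a*x^3 + 3*j^4*a^2 - 12*j^4*a^2*x + 15*j^4*a^2*x^2 - 6*j^4*a^2*x^3 + 1*j^4*a^3 - 3*j^4*a^3*x + 3*j^4*a^3*x^2 - 1*j^4*a^3*x^3 - 6*j^4*k*x + 18*j^4*k*x^2 - 11*j^4*k*x^3 - 9*j^4*k*a*x + 21*j^4*k*a*x^2 - 12*j^4*k*a*x^3 - 3*j^4*k*a^2*x + 6*j^4*k*a^2*x^2 - 3*j^4*k*a^2*x^3 + 6*j^4*k^2*x^2 - 6*j^4*k^2*x^3 + 3*j^4*k^2*a*x^2 - 3*j^4*k^2*a*x^3 - 1*j^4*k^3*x^3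

/-- Telescoping antidifference. -/
noncomputable def Uf (a x : ℂ) (k j : ℕ) : ℂ :=
  poch (a + 3) j * poch (-((k : ℂ) + 1)) j * x ^ j * Mf a x (k : ℂ) (j : ℂ) /
    (poch a j * ((a + (j : ℂ)) * (a + (j : ℂ) + 1) * (a + (j : ℂ) + 2)) * (j.factorial : ℂ)
      * ((k : ℂ) + 1))

set_option maxHeartbeats 2000000 in
set_option maxRecDepth 10000 in
lemma cert (a x k j : ℂ) :
    (a + j) * (a + j + 1) * (a + j + 2) * (j + 1) *
      ((-2 * a - 6 * x ^ 2 * k * a ^ 2 + 6 * x ^ 3 * k * a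
          + 3 * x ^ 3 * k * a ^ 2 + 2 * x ^ 3 * k + 2 * x ^ 3 * a
          - 3 * x ^ 2 * a ^ 3 + x ^ 3 * k ^ 3 + 3 * x ^ 3 * k ^ 2
          - 15 * x ^ 2 * k * a - 3 * x ^ 2 * k ^ 2 * a
          + 3 * x ^ 3 * k ^ 2 * a - 6 * x ^ 2 * k ^ 2 + 3 * x ^ 3 * a ^ 2
          + x ^ 3 * a ^ 3 + 9 * x * k * a + 6 * x * a + 6 * x * k
          - 3 * a ^ 2 - a ^ 3 + 3 * x * k * a ^ 2 + 3 * x * a ^ 3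
          + 9 * x * a ^ 2 - 6 * x ^ 2 * a - 6 * x ^ 2 * k - 9 * x ^ 2 * a ^ 2) * (k + 1) + (x - 1) * (-2 * a + 6 * x + 6 * x ^ 3 - 6 * x ^ 2 * k * a ^ 2
            + 12 * x ^ 3 * k * a + 3 * x ^ 3 * k * a ^ 2
            + 11 * x ^ 3 * k + 11 * x ^ 3 * a - 3 * x ^ 2 * a ^ 3
            + x ^ 3 * k ^ 3 + 6 * x ^ 3 * k ^ 2 - 21 * x ^ 2 * k * a
            - 3 * x ^ 2 * k ^ 2 * a + 3 * x ^ 3 * k ^ 2 * a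
            - 6 * x ^ 2 * k ^ 2 + 6 * x ^ 3 * a ^ 2 + x ^ 3 * a ^ 3
            + 9 * x * k * a + 15 * x * a + 6 * x * k - 3 * a ^ 2 - a ^ 3
            + 3 * x * k * a ^ 2 - 12 * x ^ 2 + 3 * x * a ^ 3 + 12 * x * a ^ 2
            - 24 * x ^ 2 * a - 18 * x ^ 2 * k - 15 * x ^ 2 * a ^ 2) * (k + 1 - j))
    = -(x * (k + 1 - j) * Mf a x k (j + 1)) - (j + 1) * Mf a x k j := by
  simp only [Mf]
  ring

lemma key_abs (x p c q f X A B M0 M1 k1 w u0 u1 u2 u3 v : ℂ)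
    (hp : p ≠ 0) (hf : f ≠ 0) (hk : k1 ≠ 0) (h0 : u0 ≠ 0) (h1 : u1 ≠ 0) (h2 : u2 ≠ 0)
    (h3 : u3 ≠ 0) (hv : v ≠ 0)
    (hcert : u0 * u1 * u2 * v * (A * k1 + (x - 1) * B * w) = -(x * w * M1) - v * M0) :
    A * (c * q * X / (p * f)) + (x - 1) * B * (c * (w * q / k1) * X / (p * f))
      = c * u3 * (q * (-w)) * (X * x) * M1 / (p * u0 * (u1 * u2 * u3) * (f * v) * k1)
        - c * q * X * M0 / (p * (u0 * u1 * u2) * f * k1) := by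
  have e1 : c * u3 * (q * (-w)) * (X * x) * M1 / (p * u0 * (u1 * u2 * u3) * (f * v) * k1)
      = (c * q * X / (p * f)) * (-(x * w * M1) / (u0 * u1 * u2 * v * k1)) := by
    have hD1 : p * u0 * (u1 * u2 * u3) * (f * v) * k1 ≠ 0 :=
      mul_ne_zero (mul_ne_zero (mul_ne_zero (mul_ne_zero hp h0)
        (mul_ne_zero (mul_ne_zero h1 h2) h3)) (mul_ne_zero hf hv)) hk
    have hD2 : p * f * (u0 * u1 * u2 * v * k1) ≠ 0 :=
      mul_ne_zero (mul_ne_zero hp hf)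
        (mul_ne_zero (mul_ne_zero (mul_ne_zero (mul_ne_zero h0 h1) h2) hv) hk)
    rw [div_mul_div_comm, div_eq_div_iff hD1 hD2]
    ring
  have e3 : A + (x - 1) * B * (w / k1)
      = -(x * w * M1) / (u0 * u1 * u2 * v * k1) - M0 / (u0 * u1 * u2 * k1) := by
    rw [div_sub_div _ _ (by simp [h0, h1, h2, hv, hk]) (by simp [h0, h1, h2, hk]),
      eq_div_iff (by simp [h0, h1, h2, hv, hk])]
    field_simp
    linear_combination hcert
  calc A * (c * q * X / (p * f)) + (x - 1) * B * (c * (w * q / k1) * X / (p * f))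
      = (c * q * X / (p * f)) * (A + (x - 1) * B * (w / k1)) := by ring
    _ = (c * q * X / (p * f)) * (-(x * w * M1) / (u0 * u1 * u2 * v * k1)
          - M0 / (u0 * u1 * u2 * k1)) := by rw [e3]
    _ = c * u3 * (q * (-w)) * (X * x) * M1 / (p * u0 * (u1 * u2 * u3) * (f * v) * k1)
        - c * q * X * M0 / (p * (u0 * u1 * u2) * f * k1) := by
        rw [e1]; ring

set_option maxHeartbeats 2000000 in
set_option maxRecDepth 10000 in
lemma key (a x : ℂ) (ha : ∀ m : ℕ, a + (m : ℂ) ≠ 0) (k j : ℕ) :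
    (-2 * a - 6 * x ^ 2 * (k : ℂ) * a ^ 2 + 6 * x ^ 3 * (k : ℂ) * a
          + 3 * x ^ 3 * (k : ℂ) * a ^ 2 + 2 * x ^ 3 * (k : ℂ) + 2 * x ^ 3 * a
          - 3 * x ^ 2 * a ^ 3 + x ^ 3 * (k : ℂ) ^ 3 + 3 * x ^ 3 * (k : ℂ) ^ 2
          - 15 * x ^ 2 * (k : ℂ) * a - 3 * x ^ 2 * (k : ℂ) ^ 2 * a
          + 3 * x ^ 3 * (k : ℂ) ^ 2 * a - 6 * x ^ 2 * (k : ℂ) ^ 2 + 3 * x ^ 3 * a ^ 2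
          + x ^ 3 * a ^ 3 + 9 * x * (k : ℂ) * a + 6 * x * a + 6 * x * (k : ℂ)
          - 3 * a ^ 2 - a ^ 3 + 3 * x * (k : ℂ) * a ^ 2 + 3 * x * a ^ 3
          + 9 * x * a ^ 2 - 6 * x ^ 2 * a - 6 * x ^ 2 * (k : ℂ) - 9 * x ^ 2 * a ^ 2)
        * (poch (a + 3) j * poch (-((k : ℂ) + 1)) j * x ^ j / (poch a j * (j.factorial : ℂ)))
      + (x - 1) * (-2 * a + 6 * x + 6 * x ^ 3 - 6 * x ^ 2 * (k : ℂ) * a ^ 2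
            + 12 * x ^ 3 * (k : ℂ) * a + 3 * x ^ 3 * (k : ℂ) * a ^ 2
            + 11 * x ^ 3 * (k : ℂ) + 11 * x ^ 3 * a - 3 * x ^ 2 * a ^ 3
            + x ^ 3 * (k : ℂ) ^ 3 + 6 * x ^ 3 * (k : ℂ) ^ 2 - 21 * x ^ 2 * (k : ℂ) * a
            - 3 * x ^ 2 * (k : ℂ) ^ 2 * a + 3 * x ^ 3 * (k : ℂ) ^ 2 * a
            - 6 * x ^ 2 * (k : ℂ) ^ 2 + 6 * x ^ 3 * a ^ 2 + x ^ 3 * a ^ 3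
            + 9 * x * (k : ℂ) * a + 15 * x * a + 6 * x * (k : ℂ) - 3 * a ^ 2 - a ^ 3
            + 3 * x * (k : ℂ) * a ^ 2 - 12 * x ^ 2 + 3 * x * a ^ 3 + 12 * x * a ^ 2
            - 24 * x ^ 2 * a - 18 * x ^ 2 * (k : ℂ) - 15 * x ^ 2 * a ^ 2)
        * (poch (a + 3) j * poch (-(k : ℂ)) j * x ^ j / (poch a j * (j.factorial : ℂ)))
      = Uf a x k (j + 1) - Uf a x k j := by
  have hp : poch a j ≠ 0 := poch_a_ne ha j
  have hf : (j.factorial : ℂ) ≠ 0 := Nat.cast_ne_zero.mpr (Nat.factorial_ne_zero j)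
  have hk : ((k : ℂ) + 1) ≠ 0 := by
    have := Nat.cast_add_one_ne_zero (R := ℂ) k; exact_mod_cast this
  have h0 : a + (j : ℂ) ≠ 0 := ha j
  have h1 : a + (j : ℂ) + 1 ≠ 0 := by have := ha (j + 1); push_cast at this; rw [← add_assoc] at this; exact this
  have h2 : a + (j : ℂ) + 2 ≠ 0 := by have := ha (j + 2); push_cast at this; rw [← add_assoc] at this; exact this
  have h3 : a + (j : ℂ) + 3 ≠ 0 := by have := ha (j + 3); push_cast at this; rw [← add_assoc] at this; exact this
  have hv : ((j : ℂ) + 1) ≠ 0 := by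
    have := Nat.cast_add_one_ne_zero (R := ℂ) j; exact_mod_cast this
  have hr : poch (-(k : ℂ)) j = ((k : ℂ) + 1 - (j : ℂ)) * poch (-((k : ℂ) + 1)) j / ((k : ℂ) + 1) := by
    rw [eq_div_iff hk]; linear_combination -pochP k j
  have habs := key_abs x (poch a j) (poch (a + 3) j) (poch (-((k : ℂ) + 1)) j)
    (j.factorial : ℂ) (x ^ j)
    (-2 * a - 6 * x ^ 2 * (k : ℂ) * a ^ 2 + 6 * x ^ 3 * (k : ℂ) * a
          + 3 * x ^ 3 * (k : ℂ) * a ^ 2 + 2 * x ^ 3 * (k : ℂ) + 2 * x ^ 3 * a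
          - 3 * x ^ 2 * a ^ 3 + x ^ 3 * (k : ℂ) ^ 3 + 3 * x ^ 3 * (k : ℂ) ^ 2
          - 15 * x ^ 2 * (k : ℂ) * a - 3 * x ^ 2 * (k : ℂ) ^ 2 * a
          + 3 * x ^ 3 * (k : ℂ) ^ 2 * a - 6 * x ^ 2 * (k : ℂ) ^ 2 + 3 * x ^ 3 * a ^ 2
          + x ^ 3 * a ^ 3 + 9 * x * (k : ℂ) * a + 6 * x * a + 6 * x * (k : ℂ)
          - 3 * a ^ 2 - a ^ 3 + 3 * x * (k : ℂ) * a ^ 2 + 3 * x * a ^ 3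
          + 9 * x * a ^ 2 - 6 * x ^ 2 * a - 6 * x ^ 2 * (k : ℂ) - 9 * x ^ 2 * a ^ 2)
    (-2 * a + 6 * x + 6 * x ^ 3 - 6 * x ^ 2 * (k : ℂ) * a ^ 2
            + 12 * x ^ 3 * (k : ℂ) * a + 3 * x ^ 3 * (k : ℂ) * a ^ 2
            + 11 * x ^ 3 * (k : ℂ) + 11 * x ^ 3 * a - 3 * x ^ 2 * a ^ 3
            + x ^ 3 * (k : ℂ) ^ 3 + 6 * x ^ 3 * (k : ℂ) ^ 2 - 21 * x ^ 2 * (k : ℂ) * a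
            - 3 * x ^ 2 * (k : ℂ) ^ 2 * a + 3 * x ^ 3 * (k : ℂ) ^ 2 * a
            - 6 * x ^ 2 * (k : ℂ) ^ 2 + 6 * x ^ 3 * a ^ 2 + x ^ 3 * a ^ 3
            + 9 * x * (k : ℂ) * a + 15 * x * a + 6 * x * (k : ℂ) - 3 * a ^ 2 - a ^ 3
            + 3 * x * (k : ℂ) * a ^ 2 - 12 * x ^ 2 + 3 * x * a ^ 3 + 12 * x * a ^ 2
            - 24 * x ^ 2 * a - 18 * x ^ 2 * (k : ℂ) - 15 * x ^ 2 * a ^ 2)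
    (Mf a x (k : ℂ) (j : ℂ)) (Mf a x (k : ℂ) ((j : ℂ) + 1))
    ((k : ℂ) + 1) ((k : ℂ) + 1 - (j : ℂ)) (a + (j : ℂ)) (a + (j : ℂ) + 1) (a + (j : ℂ) + 2)
    (a + (j : ℂ) + 3) ((j : ℂ) + 1) hp hf hk h0 h1 h2 h3 hv
    (cert a x (k : ℂ) (j : ℂ))
  rw [hr]
  simp only [Uf, poch_succ, Nat.factorial_succ]
  push_cast
  linear_combination habs

set_option maxHeartbeats 2000000 in
set_option maxRecDepth 10000 in
theorem stmt_16 (a x : ℂ) (ha : ∀ m : ℕ, a + (m : ℂ) ≠ 0)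
    (S : ℕ → ℂ)
    (hS : ∀ k : ℕ, S k = ∑ j ∈ Finset.range (k + 1),
      poch (a + 3) j * poch (-(k : ℂ)) j * x ^ j / (poch a j * (j.factorial : ℂ))) :
    ∀ k : ℕ,
      (-2 * a - 6 * x ^ 2 * (k : ℂ) * a ^ 2 + 6 * x ^ 3 * (k : ℂ) * a
          + 3 * x ^ 3 * (k : ℂ) * a ^ 2 + 2 * x ^ 3 * (k : ℂ) + 2 * x ^ 3 * a
          - 3 * x ^ 2 * a ^ 3 + x ^ 3 * (k : ℂ) ^ 3 + 3 * x ^ 3 * (k : ℂ) ^ 2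
          - 15 * x ^ 2 * (k : ℂ) * a - 3 * x ^ 2 * (k : ℂ) ^ 2 * a
          + 3 * x ^ 3 * (k : ℂ) ^ 2 * a - 6 * x ^ 2 * (k : ℂ) ^ 2 + 3 * x ^ 3 * a ^ 2
          + x ^ 3 * a ^ 3 + 9 * x * (k : ℂ) * a + 6 * x * a + 6 * x * (k : ℂ)
          - 3 * a ^ 2 - a ^ 3 + 3 * x * (k : ℂ) * a ^ 2 + 3 * x * a ^ 3
          + 9 * x * a ^ 2 - 6 * x ^ 2 * a - 6 * x ^ 2 * (k : ℂ) - 9 * x ^ 2 * a ^ 2)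
          * S (k + 1)
      + (x - 1) *
          (-2 * a + 6 * x + 6 * x ^ 3 - 6 * x ^ 2 * (k : ℂ) * a ^ 2
            + 12 * x ^ 3 * (k : ℂ) * a + 3 * x ^ 3 * (k : ℂ) * a ^ 2
            + 11 * x ^ 3 * (k : ℂ) + 11 * x ^ 3 * a - 3 * x ^ 2 * a ^ 3
            + x ^ 3 * (k : ℂ) ^ 3 + 6 * x ^ 3 * (k : ℂ) ^ 2 - 21 * x ^ 2 * (k : ℂ) * a
            - 3 * x ^ 2 * (k : ℂ) ^ 2 * a + 3 * x ^ 3 * (k : ℂ) ^ 2 * a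
            - 6 * x ^ 2 * (k : ℂ) ^ 2 + 6 * x ^ 3 * a ^ 2 + x ^ 3 * a ^ 3
            + 9 * x * (k : ℂ) * a + 15 * x * a + 6 * x * (k : ℂ) - 3 * a ^ 2 - a ^ 3
            + 3 * x * (k : ℂ) * a ^ 2 - 12 * x ^ 2 + 3 * x * a ^ 3 + 12 * x * a ^ 2
            - 24 * x ^ 2 * a - 18 * x ^ 2 * (k : ℂ) - 15 * x ^ 2 * a ^ 2) * S k = 0 := by
  intro k
  have hS1 : S (k + 1) = ∑ j ∈ Finset.range (k + 2),
      poch (a + 3) j * poch (-((k : ℂ) + 1)) j * x ^ j / (poch a j * (j.factorial : ℂ)) := by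
    rw [hS (k + 1)]
    norm_num
  have hS0 : S k = ∑ j ∈ Finset.range (k + 2),
      poch (a + 3) j * poch (-(k : ℂ)) j * x ^ j / (poch a j * (j.factorial : ℂ)) := by
    rw [hS k, Finset.sum_range_succ _ (k + 1), poch_neg_nat k]
    simp
  rw [hS1, hS0, Finset.mul_sum, Finset.mul_sum, ← Finset.sum_add_distrib]
  have htel : ∑ j ∈ Finset.range (k + 2), (Uf a x k (j + 1) - Uf a x k j)
      = Uf a x k (k + 2) - Uf a x k 0 := Finset.sum_range_sub (Uf a x k) (k + 2)
  have hcong : ∀ j ∈ Finset.range (k + 2),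
      (-2 * a - 6 * x ^ 2 * (k : ℂ) * a ^ 2 + 6 * x ^ 3 * (k : ℂ) * a
          + 3 * x ^ 3 * (k : ℂ) * a ^ 2 + 2 * x ^ 3 * (k : ℂ) + 2 * x ^ 3 * a
          - 3 * x ^ 2 * a ^ 3 + x ^ 3 * (k : ℂ) ^ 3 + 3 * x ^ 3 * (k : ℂ) ^ 2
          - 15 * x ^ 2 * (k : ℂ) * a - 3 * x ^ 2 * (k : ℂ) ^ 2 * a
          + 3 * x ^ 3 * (k : ℂ) ^ 2 * a - 6 * x ^ 2 * (k : ℂ) ^ 2 + 3 * x ^ 3 * a ^ 2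
          + x ^ 3 * a ^ 3 + 9 * x * (k : ℂ) * a + 6 * x * a + 6 * x * (k : ℂ)
          - 3 * a ^ 2 - a ^ 3 + 3 * x * (k : ℂ) * a ^ 2 + 3 * x * a ^ 3
          + 9 * x * a ^ 2 - 6 * x ^ 2 * a - 6 * x ^ 2 * (k : ℂ) - 9 * x ^ 2 * a ^ 2)
        * (poch (a + 3) j * poch (-((k : ℂ) + 1)) j * x ^ j / (poch a j * (j.factorial : ℂ)))
      + (x - 1) * (-2 * a + 6 * x + 6 * x ^ 3 - 6 * x ^ 2 * (k : ℂ) * a ^ 2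
            + 12 * x ^ 3 * (k : ℂ) * a + 3 * x ^ 3 * (k : ℂ) * a ^ 2
            + 11 * x ^ 3 * (k : ℂ) + 11 * x ^ 3 * a - 3 * x ^ 2 * a ^ 3
            + x ^ 3 * (k : ℂ) ^ 3 + 6 * x ^ 3 * (k : ℂ) ^ 2 - 21 * x ^ 2 * (k : ℂ) * a
            - 3 * x ^ 2 * (k : ℂ) ^ 2 * a + 3 * x ^ 3 * (k : ℂ) ^ 2 * a
            - 6 * x ^ 2 * (k : ℂ) ^ 2 + 6 * x ^ 3 * a ^ 2 + x ^ 3 * a ^ 3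
            + 9 * x * (k : ℂ) * a + 15 * x * a + 6 * x * (k : ℂ) - 3 * a ^ 2 - a ^ 3
            + 3 * x * (k : ℂ) * a ^ 2 - 12 * x ^ 2 + 3 * x * a ^ 3 + 12 * x * a ^ 2
            - 24 * x ^ 2 * a - 18 * x ^ 2 * (k : ℂ) - 15 * x ^ 2 * a ^ 2)
        * (poch (a + 3) j * poch (-(k : ℂ)) j * x ^ j / (poch a j * (j.factorial : ℂ)))
      = Uf a x k (j + 1) - Uf a x k j := fun j _ => key a x ha k j
  rw [Finset.sum_congr rfl hcong, htel]
  have hU0 : Uf a x k 0 = 0 := by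
    have hM : Mf a x (k : ℂ) ((0 : ℕ) : ℂ) = 0 := by norm_num [Mf]
    simp only [Uf, hM, mul_zero, zero_div]
  have hUend : Uf a x k (k + 2) = 0 := by
    have h3 := poch_neg_nat (k + 1)
    push_cast at h3
    have hidx : k + 1 + 1 = k + 2 := by omega
    rw [hidx] at h3
    simp only [Uf, h3, mul_zero, zero_mul, zero_div]
  rw [hU0, hUend]
  ring
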